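/- Let S = S(n₁, …, n_l) be a starlike tree whose branches have orders n₁, …, n_l, and suppose exactly r of the nᵢ satisfy nᵢ ≡ 1 (mod 3), exactly s satisfy nᵢ ≡ 2 (mod 3), and exactly t satisfy nᵢ ≡ 0 (mod 3), with l = r + s + t. Then the domination number of S equals: Σᵢ₌₁^l ⌈nᵢ/3⌉ − (r − 1) if r ≥ 1; Σᵢ₌₁^l ⌈nᵢ/3⌉ if r = 0 and s ≥ 1; and Σᵢ₌₁^l ⌈nᵢ/3⌉ + 1 if r = 0 and s = 0. -/

import Mathlib

open SimpleGraph Finset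

/-- `D` is a dominating set of `G`: every vertex is in `D` or adjacent to a vertex of `D`. -/
def SimpleGraph.IsDominatingSet {V : Type*} (G : SimpleGraph V) (D : Set V) : Prop :=
  ∀ v : V, v ∈ D ∨ ∃ u ∈ D, G.Adj u v

/-- The domination number of a finite graph. -/
noncomputable def SimpleGraph.dominationNumber {V : Type*} [Fintype V]
    (G : SimpleGraph V) : ℕ :=
  sInf {k | ∃ D : Finset V, D.card = k ∧ G.IsDominatingSet ↑D}

/-- The bondage number of a finite graph: the least size of a set of edges whose removal
increases the domination number. -/
noncomputable def SimpleGraph.bondageNumber {V : Type*} [Fintype V]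
    (G : SimpleGraph V) : ℕ :=
  sInf {k | ∃ Z : Finset (Sym2 V), Z.card = k ∧ (↑Z : Set (Sym2 V)) ⊆ G.edgeSet ∧
    G.dominationNumber < (G.deleteEdges ↑Z).dominationNumber}

/-- The strong product of two simple graphs. -/
def SimpleGraph.strongProd {V W : Type*} (G : SimpleGraph V) (H : SimpleGraph W) :
    SimpleGraph (V × W) :=
  SimpleGraph.fromRel (fun a b =>
    (a.1 = b.1 ∧ H.Adj a.2 b.2) ∨ (G.Adj a.1 b.1 ∧ a.2 = b.2) ∨
      (G.Adj a.1 b.1 ∧ H.Adj a.2 b.2))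

infixl:70 " ⊠ " => SimpleGraph.strongProd

/-- The starlike tree `S(n₁, …, n_l)`: a center vertex `none` together with `l` disjoint
paths (the branches), where the `j`-th vertex of the `i`-th branch is `some ⟨i, j⟩` and
the first vertex `some ⟨i, 0⟩` of each branch is adjacent to the center. -/
def starlikeTree (l : ℕ) (nb : Fin l → ℕ) :
    SimpleGraph (Option ((i : Fin l) × Fin (nb i))) :=
  SimpleGraph.fromRel (fun a b =>
    (∃ (i : Fin l) (j : Fin (nb i)), a = none ∧ b = some ⟨i, j⟩ ∧ (j : ℕ) = 0) ∨
    (∃ (i : Fin l) (j k : Fin (nb i)),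
      a = some ⟨i, j⟩ ∧ b = some ⟨i, k⟩ ∧ (j : ℕ) + 1 = (k : ℕ)))

section aux
variable {l : ℕ} {nb : Fin l → ℕ}

lemma st_some_inj {i i' : Fin l} {j : Fin (nb i)} {j' : Fin (nb i')}
    (h : (some ⟨i, j⟩ : Option ((i : Fin l) × Fin (nb i))) = some ⟨i', j'⟩) :
    i = i' ∧ HEq j j' := by
  simpa [Sigma.mk.inj_iff] using h

lemma st_adj_center (i : Fin l) (j : Fin (nb i)) (hj : (j : ℕ) = 0) :
    (starlikeTree l nb).Adj none (some ⟨i, j⟩) := by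
  rw [starlikeTree, SimpleGraph.fromRel_adj]
  exact ⟨by simp, Or.inl (Or.inl ⟨i, j, rfl, rfl, hj⟩)⟩

lemma st_adj_succ (i : Fin l) (j k : Fin (nb i)) (h : (j : ℕ) + 1 = (k : ℕ)) :
    (starlikeTree l nb).Adj (some ⟨i, j⟩) (some ⟨i, k⟩) := by
  rw [starlikeTree, SimpleGraph.fromRel_adj]
  refine ⟨?_, Or.inl (Or.inr ⟨i, j, k, rfl, rfl, h⟩)⟩
  intro hjk
  obtain ⟨-, hjk⟩ := st_some_inj hjk
  rw [eq_of_heq hjk] at h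
  omega

lemma st_adj_some {u : Option ((i : Fin l) × Fin (nb i))} {i : Fin l} {j : Fin (nb i)}
    (h : (starlikeTree l nb).Adj u (some ⟨i, j⟩)) :
    (u = none ∧ (j : ℕ) = 0) ∨
      ∃ k : Fin (nb i), u = some ⟨i, k⟩ ∧ ((k : ℕ) + 1 = (j : ℕ) ∨ (j : ℕ) + 1 = (k : ℕ)) := by
  rw [starlikeTree, SimpleGraph.fromRel_adj] at h
  obtain ⟨-, h | h⟩ := h
  · rcases h with ⟨i', j', hu, hb, hj'⟩ | ⟨i', j', k', hu, hb, hjk⟩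
    · obtain ⟨rfl, hj⟩ := st_some_inj hb.symm
      exact Or.inl ⟨hu, by rw [← eq_of_heq hj]; exact hj'⟩
    · obtain ⟨rfl, hk⟩ := st_some_inj hb.symm
      rw [eq_of_heq hk] at hjk
      exact Or.inr ⟨j', hu, Or.inl hjk⟩
  · rcases h with ⟨i', j', hu, hb, hj'⟩ | ⟨i', j', k', hb, hu, hjk⟩
    · exact absurd hu (by simp)
    · obtain ⟨rfl, hj⟩ := st_some_inj hb.symm
      rw [eq_of_heq hj] at hjk
      exact Or.inr ⟨k', hu, Or.inr hjk⟩

lemma st_adj_none {u : Option ((i : Fin l) × Fin (nb i))}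
    (h : (starlikeTree l nb).Adj u none) :
    ∃ (i : Fin l) (j : Fin (nb i)), u = some ⟨i, j⟩ ∧ (j : ℕ) = 0 := by
  rw [starlikeTree, SimpleGraph.fromRel_adj] at h
  obtain ⟨hne, h | h⟩ := h
  · rcases h with ⟨i', j', hu, hb, hj'⟩ | ⟨i', j', k', hu, hb, hjk⟩
    · exact absurd hb (by simp)
    · exact absurd hb (by simp)
  · rcases h with ⟨i', j', hu, hb, hj'⟩ | ⟨i', j', k', hu, hb, hjk⟩
    · exact ⟨i', j', hb, hj'⟩
    · exact absurd hu (by simp)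


lemma fin_filter_card (n : ℕ) (p : ℕ → Prop) [DecidablePred p] :
    ((univ : Finset (Fin n)).filter fun j => p j.val).card = ((range n).filter p).card := by
  rw [Finset.card_filter, Finset.card_filter]
  exact Fin.sum_univ_eq_sum_range (fun j => if p j then 1 else 0) n

lemma range_filter_mod (c : ℕ) (hc : c < 3) (n : ℕ) :
    ((range n).filter (fun j => j % 3 = c)).card = if c < n % 3 then n / 3 + 1 else n / 3 := by
  induction n with
  | zero => simp
  | succ n ih =>
      rw [Finset.range_add_one, Finset.filter_insert]
      split_ifs with h1 h2 h3
      · rw [Finset.card_insert_of_notMem (by simp), ih]; split_ifs <;> omega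
      · rw [Finset.card_insert_of_notMem (by simp), ih]; split_ifs <;> omega
      · rw [ih]; split_ifs <;> omega
      · rw [ih]; split_ifs <;> omega

lemma cardA (n : ℕ) (hn : 1 ≤ n) :
    ((range n).filter fun j => j % 3 = 2 ∨ (n % 3 = 2 ∧ j + 1 = n)).card = (n + 1) / 3 := by
  by_cases h2 : n % 3 = 2
  · have : ((range n).filter fun j => j % 3 = 2 ∨ (n % 3 = 2 ∧ j + 1 = n))
        = insert (n - 1) ((range n).filter fun j => j % 3 = 2) := by
      ext j
      simp only [Finset.mem_filter, Finset.mem_range, Finset.mem_insert]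
      constructor
      · rintro ⟨hj, hj2 | ⟨-, hj1⟩⟩
        · exact Or.inr ⟨hj, hj2⟩
        · exact Or.inl (by omega)
      · rintro (rfl | ⟨hj, hj2⟩)
        · exact ⟨by omega, Or.inr ⟨h2, by omega⟩⟩
        · exact ⟨hj, Or.inl hj2⟩
    rw [this, Finset.card_insert_of_notMem (by simp; omega), range_filter_mod 2 (by omega)]
    split_ifs <;> omega
  · have : ((range n).filter fun j => j % 3 = 2 ∨ (n % 3 = 2 ∧ j + 1 = n))
        = (range n).filter fun j => j % 3 = 2 := by
      apply Finset.filter_congr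
      intro j hj
      constructor
      · rintro (hj2 | ⟨hn2, -⟩); exact hj2; omega
      · exact Or.inl
    rw [this, range_filter_mod 2 (by omega)]
    split_ifs <;> omega

lemma cardB (n : ℕ) (hn1 : n % 3 ≠ 1) :
    ((range n).filter fun j => if n % 3 = 0 then j % 3 = 1 else j % 3 = 0).card
      = (n + 1) / 3 := by
  by_cases h0 : n % 3 = 0
  · simp only [if_pos h0]
    rw [range_filter_mod 1 (by omega)]
    split_ifs <;> omega
  · simp only [if_neg h0]
    rw [range_filter_mod 0 (by omega)]
    split_ifs <;> omega

lemma dom_count {n a : ℕ} (T : Finset (Fin n))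
    (h : ∀ m : ℕ, a ≤ m → m < n → ∃ d ∈ T, (d : ℕ) ≤ m + 1 ∧ m ≤ (d : ℕ) + 1) :
    n - a ≤ 3 * T.card := by
  have hsub : Finset.Ico a n ⊆ T.biUnion (fun d => {(d : ℕ) - 1, (d : ℕ), (d : ℕ) + 1}) := by
    intro m hm
    rw [Finset.mem_Ico] at hm
    obtain ⟨d, hd, h1, h2⟩ := h m hm.1 hm.2
    rw [Finset.mem_biUnion]
    exact ⟨d, hd, by simp only [Finset.mem_insert, Finset.mem_singleton]; omega⟩
  calc n - a = (Finset.Ico a n).card := (Nat.card_Ico a n).symm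
    _ ≤ _ := Finset.card_le_card hsub
    _ ≤ ∑ d ∈ T, ({(d : ℕ) - 1, (d : ℕ), (d : ℕ) + 1} : Finset ℕ).card :=
        Finset.card_biUnion_le
    _ ≤ ∑ _d ∈ T, 3 := Finset.sum_le_sum (fun d _ => by
        apply (Finset.card_insert_le _ _).trans
        apply Nat.succ_le_succ
        apply (Finset.card_insert_le _ _).trans
        simp)
    _ = 3 * T.card := by rw [Finset.sum_const, smul_eq_mul, mul_comm]

lemma dom_count0 {n : ℕ} (T : Finset (Fin n)) (h0 : ∃ d ∈ T, (d : ℕ) = 0)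
    (h : ∀ m : ℕ, 1 ≤ m → m < n → ∃ d ∈ T, (d : ℕ) ≤ m + 1 ∧ m ≤ (d : ℕ) + 1) :
    n + 1 ≤ 3 * T.card := by
  obtain ⟨d0, hd0, hd0v⟩ := h0
  have hT' : ∀ m : ℕ, 2 ≤ m → m < n → ∃ d ∈ T.erase d0, (d : ℕ) ≤ m + 1 ∧ m ≤ (d : ℕ) + 1 := by
    intro m hm hmn
    obtain ⟨d, hd, h1, h2⟩ := h m (by omega) hmn
    refine ⟨d, Finset.mem_erase.2 ⟨?_, hd⟩, h1, h2⟩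
    intro hdd0
    rw [hdd0, hd0v] at h2; omega
  have hb := dom_count (T.erase d0) hT'
  have hc : (T.erase d0).card + 1 = T.card := Finset.card_erase_add_one hd0
  have hn : 1 ≤ n := Nat.pos_of_ne_zero (by rintro rfl; exact absurd d0.isLt (by omega))
  -- n could be 1 or 2: then n+1 ≤ 3*T.card since T.card ≥ 1
  have hT1 : 1 ≤ T.card := Finset.card_pos.2 ⟨d0, hd0⟩
  omega
section upper
variable {l : ℕ} {nb : Fin l → ℕ}

lemma upper_c (hnb : ∀ i, 1 ≤ nb i) :
    ∃ D : Finset (Option ((i : Fin l) × Fin (nb i))),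
      D.card = (∑ i : Fin l, (nb i + 1) / 3) + 1 ∧
      (starlikeTree l nb).IsDominatingSet ↑D := by
  classical
  set D : Finset (Option ((i : Fin l) × Fin (nb i))) :=
    insert none (((univ : Finset (Fin l)).sigma fun i =>
      (univ : Finset (Fin (nb i))).filter fun j : Fin (nb i) =>
        (j : ℕ) % 3 = 2 ∨ (nb i % 3 = 2 ∧ (j : ℕ) + 1 = nb i)).map
      ⟨some, Option.some_injective _⟩) with hD
  have hmem : ∀ (i : Fin l) (j : Fin (nb i)),
      ((j : ℕ) % 3 = 2 ∨ (nb i % 3 = 2 ∧ (j : ℕ) + 1 = nb i)) → some ⟨i, j⟩ ∈ D := by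
    intro i j hj
    rw [hD]
    apply Finset.mem_insert_of_mem
    rw [Finset.mem_map]
    exact ⟨⟨i, j⟩, Finset.mem_sigma.2 ⟨Finset.mem_univ _, Finset.mem_filter.2
      ⟨Finset.mem_univ _, hj⟩⟩, rfl⟩
  refine ⟨D, ?_, ?_⟩
  · rw [hD, Finset.card_insert_of_notMem (by simp), Finset.card_map, Finset.card_sigma]
    congr 1
    apply Finset.sum_congr rfl
    intro i _
    rw [fin_filter_card (nb i) (fun j => j % 3 = 2 ∨ (nb i % 3 = 2 ∧ j + 1 = nb i)),
      cardA (nb i) (hnb i)]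
  · intro v
    match v with
    | none => exact Or.inl (by rw [hD]; exact Finset.mem_insert_self _ _)
    | some ⟨i, j⟩ =>
      set m := (j : ℕ) with hm
      have hmn : m < nb i := j.isLt
      by_cases hm0 : m = 0
      · exact Or.inr ⟨none, by rw [hD]; exact Finset.mem_insert_self _ _,
          st_adj_center i j hm0⟩
      · have h3 : m % 3 = 0 ∨ m % 3 = 1 ∨ m % 3 = 2 := by omega
        rcases h3 with h3 | h3 | h3
        · -- m ≥ 1, m % 3 = 0 : use m - 1
          refine Or.inr ⟨some ⟨i, ⟨m - 1, by omega⟩⟩, hmem i _ (Or.inl (by simp; omega)), ?_⟩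
          exact st_adj_succ i ⟨m - 1, by omega⟩ j (by simp; omega)
        · -- m % 3 = 1
          by_cases hlast : m + 1 = nb i
          · exact Or.inl (hmem i j (Or.inr ⟨by omega, hlast⟩))
          · refine Or.inr ⟨some ⟨i, ⟨m + 1, by omega⟩⟩, hmem i _ (Or.inl (by simp; omega)), ?_⟩
            exact (st_adj_succ i j ⟨m + 1, by omega⟩ (by simp [hm])).symm
        · exact Or.inl (hmem i j (Or.inl h3))

lemma upper_o (hnb : ∀ i, 1 ≤ nb i) (hr0 : ∀ i, nb i % 3 ≠ 1) (hs1 : ∃ i, nb i % 3 = 2) :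
    ∃ D : Finset (Option ((i : Fin l) × Fin (nb i))),
      D.card = (∑ i : Fin l, (nb i + 1) / 3) ∧
      (starlikeTree l nb).IsDominatingSet ↑D := by
  classical
  set D : Finset (Option ((i : Fin l) × Fin (nb i))) :=
    (((univ : Finset (Fin l)).sigma fun i =>
      (univ : Finset (Fin (nb i))).filter fun j : Fin (nb i) =>
        if nb i % 3 = 0 then (j : ℕ) % 3 = 1 else (j : ℕ) % 3 = 0).map
      ⟨some, Option.some_injective _⟩) with hD
  have hmem : ∀ (i : Fin l) (j : Fin (nb i)),
      (if nb i % 3 = 0 then (j : ℕ) % 3 = 1 else (j : ℕ) % 3 = 0) → some ⟨i, j⟩ ∈ D := by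
    intro i j hj
    rw [hD, Finset.mem_map]
    exact ⟨⟨i, j⟩, Finset.mem_sigma.2 ⟨Finset.mem_univ _, Finset.mem_filter.2
      ⟨Finset.mem_univ _, hj⟩⟩, rfl⟩
  refine ⟨D, ?_, ?_⟩
  · rw [hD, Finset.card_map, Finset.card_sigma]
    apply Finset.sum_congr rfl
    intro i _
    rw [fin_filter_card (nb i) (fun j => if nb i % 3 = 0 then j % 3 = 1 else j % 3 = 0),
      cardB (nb i) (hr0 i)]
  · intro v
    match v with
    | none =>
      obtain ⟨i, hi⟩ := hs1
      refine Or.inr ⟨some ⟨i, ⟨0, hnb i⟩⟩, hmem i _ (by simp [hi]), ?_⟩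
      exact (st_adj_center i ⟨0, hnb i⟩ rfl).symm
    | some ⟨i, j⟩ =>
      set m := (j : ℕ) with hm
      have hmn : m < nb i := j.isLt
      have hni := hr0 i
      have h3 : m % 3 = 0 ∨ m % 3 = 1 ∨ m % 3 = 2 := by omega
      by_cases h0 : nb i % 3 = 0
      · rcases h3 with h3 | h3 | h3
        · refine Or.inr ⟨some ⟨i, ⟨m + 1, by omega⟩⟩, hmem i _ (by simp [h0]; omega), ?_⟩
          exact (st_adj_succ i j ⟨m + 1, by omega⟩ (by simp [hm])).symm
        · exact Or.inl (hmem i j (by simp [h0]; omega))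
        · refine Or.inr ⟨some ⟨i, ⟨m - 1, by omega⟩⟩, hmem i _ (by simp [h0]; omega), ?_⟩
          exact st_adj_succ i ⟨m - 1, by omega⟩ j (by simp; omega)
      · have h2 : nb i % 3 = 2 := by omega
        rcases h3 with h3 | h3 | h3
        · exact Or.inl (hmem i j (by simp [h0]; omega))
        · refine Or.inr ⟨some ⟨i, ⟨m - 1, by omega⟩⟩, hmem i _ (by simp [h0]; omega), ?_⟩
          exact st_adj_succ i ⟨m - 1, by omega⟩ j (by simp; omega)
        · refine Or.inr ⟨some ⟨i, ⟨m + 1, by omega⟩⟩, hmem i _ (by simp [h0]; omega), ?_⟩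
          exact (st_adj_succ i j ⟨m + 1, by omega⟩ (by simp [hm])).symm
end upper


section lower
variable {l : ℕ} {nb : Fin l → ℕ}

lemma lower_main (hnb : ∀ i, 1 ≤ nb i) (D : Finset (Option ((i : Fin l) × Fin (nb i))))
    (hD : (starlikeTree l nb).IsDominatingSet ↑D) :
    (∑ i : Fin l, (nb i + 1) / 3) ≤ D.card ∧
    (((∃ i, nb i % 3 = 1) ∨ (∀ i, nb i % 3 = 0)) →
      (∑ i : Fin l, (nb i + 1) / 3) + 1 ≤ D.card) := by
  classical
  set Di : (i : Fin l) → Finset (Fin (nb i)) :=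
    fun i => (univ : Finset (Fin (nb i))).filter (fun j => some ⟨i, j⟩ ∈ D) with hDi
  -- interior domination of each branch
  have branch_dom : ∀ (i : Fin l) (m : ℕ), 1 ≤ m → m < nb i →
      ∃ d ∈ Di i, (d : ℕ) ≤ m + 1 ∧ m ≤ (d : ℕ) + 1 := by
    intro i m hm1 hm2
    set j : Fin (nb i) := ⟨m, hm2⟩ with hj
    have hjv : (j : ℕ) = m := rfl
    rcases hD (some ⟨i, j⟩) with hin | ⟨u, hu, hadj⟩
    · exact ⟨j, Finset.mem_filter.2 ⟨Finset.mem_univ _, Finset.mem_coe.1 hin⟩, by omega⟩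
    · rcases st_adj_some hadj with ⟨rfl, hj0⟩ | ⟨k, rfl, hk⟩
      · omega
      · exact ⟨k, Finset.mem_filter.2 ⟨Finset.mem_univ _, Finset.mem_coe.1 hu⟩, by omega⟩
  -- sum of branch pieces bounds the total
  have sum_ineq : (∑ i : Fin l, (Di i).card) + (if none ∈ D then 1 else 0) ≤ D.card := by
    set S : Finset (Option ((i : Fin l) × Fin (nb i))) :=
      ((univ : Finset (Fin l)).sigma fun i => Di i).map ⟨some, Option.some_injective _⟩ with hS
    have hSD : S ⊆ D := by
      intro x hx
      rw [hS, Finset.mem_map] at hx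
      obtain ⟨⟨i, j⟩, hmem, rfl⟩ := hx
      rw [Finset.mem_sigma] at hmem
      exact (Finset.mem_filter.1 hmem.2).2
    have hScard : S.card = ∑ i : Fin l, (Di i).card := by
      rw [hS, Finset.card_map, Finset.card_sigma]
    by_cases hn : none ∈ D
    · have hins : insert none S ⊆ D := Finset.insert_subset hn hSD
      have h1 := Finset.card_le_card hins
      rw [Finset.card_insert_of_notMem (by simp [hS])] at h1
      simp only [if_pos hn]
      omega
    · have h1 := Finset.card_le_card hSD
      simp only [if_neg hn]
      omega
  have bound1 : ∀ i : Fin l, (nb i + 1) / 3 ≤ (Di i).card := by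
    intro i
    have h := dom_count (a := 1) (Di i) (branch_dom i)
    have := hnb i
    omega
  constructor
  · calc (∑ i : Fin l, (nb i + 1) / 3) ≤ ∑ i : Fin l, (Di i).card :=
          Finset.sum_le_sum (fun i _ => bound1 i)
      _ ≤ D.card := by omega
  · intro hcase
    by_cases hn : none ∈ D
    · rw [if_pos hn] at sum_ineq
      have h2 : (∑ i : Fin l, (nb i + 1) / 3) ≤ ∑ i : Fin l, (Di i).card :=
        Finset.sum_le_sum (fun i _ => bound1 i)
      omega
    · rw [if_neg hn] at sum_ineq
      -- the center must be dominated by the first vertex of some branch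
      have hcenter : ∃ (i0 : Fin l) (d : Fin (nb i0)), d ∈ Di i0 ∧ (d : ℕ) = 0 := by
        rcases hD none with hin | ⟨u, hu, hadj⟩
        · exact absurd (Finset.mem_coe.1 hin) hn
        · obtain ⟨i0, j0, rfl, hj0⟩ := st_adj_none hadj
          exact ⟨i0, j0, Finset.mem_filter.2 ⟨Finset.mem_univ _, Finset.mem_coe.1 hu⟩, hj0⟩
      -- find a special branch i1 with (Di i1).card ≥ (nb i1 + 1)/3 + 1
      have hspecial : ∃ i1 : Fin l, (nb i1 + 1) / 3 + 1 ≤ (Di i1).card := by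
        rcases hcase with ⟨i1, h1⟩ | hall
        · -- branch with nb i1 ≡ 1 mod 3 must be dominated entirely from within
          have hfull : ∀ m : ℕ, 0 ≤ m → m < nb i1 →
              ∃ d ∈ Di i1, (d : ℕ) ≤ m + 1 ∧ m ≤ (d : ℕ) + 1 := by
            intro m _ hm2
            rcases Nat.eq_zero_or_pos m with rfl | hm1
            · set j : Fin (nb i1) := ⟨0, hm2⟩ with hj
              have hjv : (j : ℕ) = 0 := rfl
              rcases hD (some ⟨i1, j⟩) with hin | ⟨u, hu, hadj⟩
              · exact ⟨j, Finset.mem_filter.2 ⟨Finset.mem_univ _, Finset.mem_coe.1 hin⟩,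
                  by omega⟩
              · rcases st_adj_some hadj with ⟨rfl, hj0⟩ | ⟨k, rfl, hk⟩
                · exact absurd (Finset.mem_coe.1 hu) hn
                · exact ⟨k, Finset.mem_filter.2 ⟨Finset.mem_univ _, Finset.mem_coe.1 hu⟩,
                    by omega⟩
            · exact branch_dom i1 m hm1 hm2
          have h := dom_count (a := 0) (Di i1) (fun m _ => hfull m (by omega))
          exact ⟨i1, by omega⟩
        · obtain ⟨i0, d, hd, hd0⟩ := hcenter
          have h := dom_count0 (Di i0) ⟨d, hd, hd0⟩ (branch_dom i0)
          have h0 := hall i0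
          exact ⟨i0, by omega⟩
      obtain ⟨i1, hi1⟩ := hspecial
      have e1 : (∑ i ∈ univ.erase i1, (Di i).card) + (Di i1).card = ∑ i : Fin l, (Di i).card :=
        Finset.sum_erase_add univ _ (Finset.mem_univ i1)
      have e2 : (∑ i ∈ univ.erase i1, (nb i + 1) / 3) + (nb i1 + 1) / 3
          = ∑ i : Fin l, (nb i + 1) / 3 :=
        Finset.sum_erase_add univ _ (Finset.mem_univ i1)
      have e3 : (∑ i ∈ univ.erase i1, (nb i + 1) / 3) ≤ ∑ i ∈ univ.erase i1, (Di i).card :=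
        Finset.sum_le_sum (fun i _ => bound1 i)
      omega
end lower

end aux

/-- **Theorem (domination number of a starlike tree).** Let `S = S(n₁, …, n_l)` be a
starlike tree, let `r` be the number of branches whose order is `≡ 1 (mod 3)` and `s` the
number of branches whose order is `≡ 2 (mod 3)`.  Then
`γ(S) = Σ ⌈nᵢ/3⌉ - (r - 1)` if `r ≥ 1`, `γ(S) = Σ ⌈nᵢ/3⌉` if `r = 0` and `s ≥ 1`, and
`γ(S) = Σ ⌈nᵢ/3⌉ + 1` if `r = s = 0`. -/
theorem dominationNumber_starlikeTree (l : ℕ) (nb : Fin l → ℕ) (hnb : ∀ i, 1 ≤ nb i)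
    (r s : ℕ)
    (hr : r = (Finset.univ.filter (fun i : Fin l => nb i % 3 = 1)).card)
    (hs : s = (Finset.univ.filter (fun i : Fin l => nb i % 3 = 2)).card) :
    (starlikeTree l nb).dominationNumber =
      if 1 ≤ r then (∑ i : Fin l, (nb i + 2) / 3) - (r - 1)
      else if 1 ≤ s then ∑ i : Fin l, (nb i + 2) / 3
      else (∑ i : Fin l, (nb i + 2) / 3) + 1 := by
  classical
  have hsum : (∑ i : Fin l, (nb i + 2) / 3) = (∑ i : Fin l, (nb i + 1) / 3) + r := by
    rw [hr, Finset.card_filter, ← Finset.sum_add_distrib]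
    apply Finset.sum_congr rfl
    intro i _
    split_ifs with h <;> omega
  obtain ⟨Dc, hDc_card, hDc_dom⟩ := upper_c hnb
  have hne : {k | ∃ D : Finset (Option ((i : Fin l) × Fin (nb i))),
      D.card = k ∧ (starlikeTree l nb).IsDominatingSet ↑D}.Nonempty :=
    ⟨_, Dc, rfl, hDc_dom⟩
  rw [SimpleGraph.dominationNumber]
  by_cases hr1 : 1 ≤ r
  · rw [if_pos hr1]
    have hex : ∃ i, nb i % 3 = 1 := by
      obtain ⟨i, hi⟩ := Finset.card_pos.1 (by omega : 0 < (Finset.univ.filter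
        (fun i : Fin l => nb i % 3 = 1)).card)
      exact ⟨i, (Finset.mem_filter.1 hi).2⟩
    have h1 : sInf {k | ∃ D : Finset (Option ((i : Fin l) × Fin (nb i))),
        D.card = k ∧ (starlikeTree l nb).IsDominatingSet ↑D}
        = (∑ i : Fin l, (nb i + 1) / 3) + 1 := by
      apply le_antisymm
      · exact Nat.sInf_le ⟨Dc, hDc_card, hDc_dom⟩
      · apply le_csInf hne
        rintro k ⟨D, rfl, hdom⟩
        exact (lower_main hnb D hdom).2 (Or.inl hex)
    rw [h1]
    omega
  · have hr0 : ∀ i, nb i % 3 ≠ 1 := by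
      intro i hi
      have : i ∈ Finset.univ.filter (fun i : Fin l => nb i % 3 = 1) :=
        Finset.mem_filter.2 ⟨Finset.mem_univ _, hi⟩
      have := Finset.card_pos.2 ⟨i, this⟩
      omega
    rw [if_neg hr1]
    by_cases hs1 : 1 ≤ s
    · rw [if_pos hs1]
      have hex : ∃ i, nb i % 3 = 2 := by
        obtain ⟨i, hi⟩ := Finset.card_pos.1 (by omega : 0 < (Finset.univ.filter
          (fun i : Fin l => nb i % 3 = 2)).card)
        exact ⟨i, (Finset.mem_filter.1 hi).2⟩
      obtain ⟨Do, hDo_card, hDo_dom⟩ := upper_o hnb hr0 hex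
      have h1 : sInf {k | ∃ D : Finset (Option ((i : Fin l) × Fin (nb i))),
          D.card = k ∧ (starlikeTree l nb).IsDominatingSet ↑D}
          = ∑ i : Fin l, (nb i + 1) / 3 := by
        apply le_antisymm
        · exact Nat.sInf_le ⟨Do, hDo_card, hDo_dom⟩
        · apply le_csInf hne
          rintro k ⟨D, rfl, hdom⟩
          exact (lower_main hnb D hdom).1
      rw [h1]
      omega
    · rw [if_neg hs1]
      have hs0 : ∀ i, nb i % 3 ≠ 2 := by
        intro i hi
        have : i ∈ Finset.univ.filter (fun i : Fin l => nb i % 3 = 2) :=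
          Finset.mem_filter.2 ⟨Finset.mem_univ _, hi⟩
        have := Finset.card_pos.2 ⟨i, this⟩
        omega
      have hall : ∀ i, nb i % 3 = 0 := by
        intro i
        have := hr0 i
        have := hs0 i
        omega
      have h1 : sInf {k | ∃ D : Finset (Option ((i : Fin l) × Fin (nb i))),
          D.card = k ∧ (starlikeTree l nb).IsDominatingSet ↑D}
          = (∑ i : Fin l, (nb i + 1) / 3) + 1 := by
        apply le_antisymm
        · exact Nat.sInf_le ⟨Dc, hDc_card, hDc_dom⟩
        · apply le_csInf hne
          rintro k ⟨D, rfl, hdom⟩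
          exact (lower_main hnb D hdom).2 (Or.inr hall)
      rw [h1]
      omega
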